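/- Let P and Q be orthogonal projections on a complex Hilbert space H. The closure of the range of the operator PQ equals ran P ∩ (closed linear span of (ran P)^⊥ ∪ ran Q); equivalently, the orthogonal projection onto the closure of ran(PQ) is P ∧ (P^⊥ ∨ Q). -/

import Mathlib

variable {H : Type} [NormedAddCommGroup H] [InnerProductSpace ℂ H] [CompleteSpace H]

/-- `P` is an orthogonal projection on `H`: self-adjoint and idempotent. -/
def IsOrthProj (P : H →L[ℂ] H) : Prop := IsSelfAdjoint P ∧ P * P = P

/-- The closure of the range of `PQ` equals `ran P ∩ (closed linear span of ran P^⊥ ∪ ran Q)`;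
equivalently, the projection onto the closure of `ran (PQ)` is `P ∧ (P^⊥ ∨ Q)`. -/
theorem stmt6 (P Q : H →L[ℂ] H) (hP : IsOrthProj P) (hQ : IsOrthProj Q) :
    (LinearMap.range ((P * Q : H →L[ℂ] H) : H →ₗ[ℂ] H)).topologicalClosure
      = LinearMap.range (P : H →ₗ[ℂ] H) ⊓ (LinearMap.range ((1 - P : H →L[ℂ] H) : H →ₗ[ℂ] H) ⊔ LinearMap.range (Q : H →ₗ[ℂ] H)).topologicalClosure := by
  obtain ⟨-, hP2⟩ := hP
  have hfix : ∀ x, x ∈ LinearMap.range (P : H →ₗ[ℂ] H) → P x = x := by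
    rintro x ⟨y, rfl⟩
    have := congrArg (fun T : H →L[ℂ] H => T y) hP2
    simpa using this
  have hrange_ker : (LinearMap.range (P : H →ₗ[ℂ] H) : Submodule ℂ H) = LinearMap.ker ((1 - P : H →L[ℂ] H) : H →ₗ[ℂ] H) := by
    ext x
    constructor
    · intro hx
      simp [LinearMap.mem_ker, ContinuousLinearMap.sub_apply, hfix x hx]
    · intro hx
      simp only [LinearMap.mem_ker, ContinuousLinearMap.coe_coe, ContinuousLinearMap.sub_apply,
        ContinuousLinearMap.one_apply, sub_eq_zero] at hx
      exact ⟨x, hx.symm⟩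
  have hclosedP : IsClosed (LinearMap.range (P : H →ₗ[ℂ] H) : Set H) := by
    rw [hrange_ker]
    exact ContinuousLinearMap.isClosed_ker (1 - P)
  -- maps-to fact: P maps the sup into range (P*Q)
  have hmaps : ∀ y ∈ (LinearMap.range ((1 - P : H →L[ℂ] H) : H →ₗ[ℂ] H) ⊔ LinearMap.range (Q : H →ₗ[ℂ] H) : Submodule ℂ H),
      P y ∈ LinearMap.range ((P * Q : H →L[ℂ] H) : H →ₗ[ℂ] H) := by
    intro y hy
    rw [Submodule.mem_sup] at hy
    obtain ⟨a, ⟨w, rfl⟩, b, ⟨z, rfl⟩, rfl⟩ := hy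
    have hPa : P ((1 - P) w) = 0 := by
      have h := congrArg (fun T : H →L[ℂ] H => T w) hP2
      simp only [ContinuousLinearMap.mul_apply] at h
      simp [ContinuousLinearMap.sub_apply, h, sub_eq_zero]
    refine ⟨z, ?_⟩
    have h := congrArg (fun T : H →L[ℂ] H => T w) hP2
    simp only [ContinuousLinearMap.mul_apply] at h
    simp [ContinuousLinearMap.mul_apply, map_add, hPa, h]
  apply le_antisymm
  · apply Submodule.topologicalClosure_minimal
    · refine le_inf ?_ ?_
      · rintro x ⟨y, rfl⟩
        exact ⟨Q y, rfl⟩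
      · refine le_trans ?_ (Submodule.le_topologicalClosure _)
        rintro x ⟨y, rfl⟩
        have : (P * Q) y = Q y - (1 - P) (Q y) := by
          simp [ContinuousLinearMap.mul_apply, ContinuousLinearMap.sub_apply]
        rw [ContinuousLinearMap.coe_coe, this]
        exact Submodule.sub_mem _
          (Submodule.mem_sup_right ⟨y, rfl⟩)
          (Submodule.mem_sup_left ⟨Q y, rfl⟩)
    · exact hclosedP.inter (Submodule.isClosed_topologicalClosure _)
  · rintro x ⟨hx1, hx2⟩
    have hx2' : x ∈ closure ((LinearMap.range ((1 - P : H →L[ℂ] H) : H →ₗ[ℂ] H) ⊔ LinearMap.range (Q : H →ₗ[ℂ] H) : Submodule ℂ H) : Set H) := hx2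
    have hPx : P x ∈ closure ((LinearMap.range ((P * Q : H →L[ℂ] H) : H →ₗ[ℂ] H) : Submodule ℂ H) : Set H) :=
      map_mem_closure P.continuous hx2' hmaps
    rw [hfix x hx1] at hPx
    exact hPx
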